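/- arXiv:1202.4068 — 2 statements merged into one kernel-verified Lean document; each statement's English description precedes it below -/
import Mathlib

section
/- Let 𝒬 be a finite nonempty set of positive integers, δ > 0 a real number, L = Σ_{q∈𝒬} φ(q), and let Ĩ_{𝒬,δ} be the Jutila approximant. Then ∫₀¹ Ĩ_{𝒬,δ}(x) dx = 1, and for every nonzero integer h, ∫₀¹ Ĩ_{𝒬,δ}(x) e^{−2πihx} dx = (1/L) Σ_{q∈𝒬} c_q(h) · sin(2πhδ)/(2πhδ), where c_q(h) = Σ_{1≤a≤q, gcd(a,q)=1} e^{−2πiah/q} is the Ramanujan sum. -/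
open MeasureTheory

/-- Jutila's approximant `Ĩ_{𝒬,δ}` to the indicator of `[0,1]`:
`Ĩ_{𝒬,δ}(x) = (1/(2δL)) ∑_{q ∈ 𝒬} ∑_{a ∈ ℤ, gcd(a,q)=1} 𝟙_{[a/q-δ, a/q+δ]}(x)`,
where `L = ∑_{q ∈ 𝒬} φ(q)`. -/
noncomputable def jutilaApprox (𝒬 : Finset ℕ) (δ : ℝ) (x : ℝ) : ℝ :=
  (2 * δ * ∑ q ∈ 𝒬, (Nat.totient q : ℝ))⁻¹ *
    ∑ q ∈ 𝒬, ∑' a : ℤ,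
      if Int.gcd a q = 1 then
        Set.indicator (Set.Icc ((a : ℝ) / q - δ) ((a : ℝ) / q + δ)) (fun _ => (1 : ℝ)) x
      else 0

/-- The Ramanujan sum `c_q(h) = ∑_{1 ≤ a ≤ q, gcd(a,q)=1} e^{-2πiah/q}`. -/
noncomputable def ramanujanSum (q : ℕ) (h : ℤ) : ℂ :=
  ∑ a ∈ Finset.Icc 1 q,
    if Nat.gcd a q = 1 then Complex.exp (-(2 * Real.pi * Complex.I * a * h / q)) else 0


open intervalIntegral Complex


noncomputable def gfun (h : ℤ) (x : ℝ) : ℂ := Complex.exp (-(2*Real.pi*Complex.I*h*x))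

lemma gfun_cont (h : ℤ) : Continuous (gfun h) := by
  unfold gfun; fun_prop

lemma gfun_per (h k : ℤ) (x : ℝ) : gfun h (x + k) = gfun h x := by
  unfold gfun
  have : (-(2*(Real.pi:ℂ)*Complex.I*h*((x:ℝ)+(k:ℤ) : ℝ))) =
      -(2*(Real.pi:ℂ)*Complex.I*h*x) + ((-(h*k) : ℤ) * (2*Real.pi*Complex.I)) := by
    push_cast; ring
  rw [this, Complex.exp_add, Complex.exp_int_mul_two_pi_mul_I, mul_one]

lemma gcd_shift (a k : ℤ) (q : ℕ) : Int.gcd (a + q*k) q = Int.gcd a q := by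
  apply Nat.dvd_antisymm
  · have d1 : (Int.gcd (a + q*k) q : ℤ) ∣ (a + q*k) := Int.gcd_dvd_left _ _
    have d2 : (Int.gcd (a + q*k) q : ℤ) ∣ (q:ℤ) := Int.gcd_dvd_right _ _
    have h1 : (Int.gcd (a + q*k) q : ℤ) ∣ a := by
      have := dvd_sub d1 (Dvd.dvd.mul_right d2 k)
      simpa using this
    exact_mod_cast Int.dvd_gcd h1 d2
  · have d1 : (Int.gcd a q : ℤ) ∣ a := Int.gcd_dvd_left _ _
    have d2 : (Int.gcd a q : ℤ) ∣ (q:ℤ) := Int.gcd_dvd_right _ _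
    have h1 : (Int.gcd a q : ℤ) ∣ a + q*k := dvd_add d1 (Dvd.dvd.mul_right d2 k)
    exact_mod_cast Int.dvd_gcd h1 d2

lemma gfun_integral_ne (h : ℤ) (hh : h ≠ 0) (c δ : ℝ) :
    (∫ x in (c - δ)..(c + δ), gfun h x) =
      ((Real.sin (2*Real.pi*h*δ) / (Real.pi*h) : ℝ) : ℂ) * Complex.exp (-(2*Real.pi*Complex.I*h*c)) := by
  have hπ : (Real.pi : ℂ) ≠ 0 := by exact_mod_cast Real.pi_ne_zero
  have hhC : (h : ℂ) ≠ 0 := by exact_mod_cast hh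
  have hμ : (-(2*(Real.pi:ℂ)*Complex.I*h)) ≠ 0 := by
    simp [Complex.I_ne_zero, hπ, hhC]
  have key : ∀ x : ℝ, gfun h x = Complex.exp ((-(2*(Real.pi:ℂ)*Complex.I*h)) * x) := by
    intro x; unfold gfun; ring_nf
  simp_rw [key]
  rw [integral_exp_mul_complex hμ]
  set μ : ℂ := -(2*(Real.pi:ℂ)*Complex.I*h) with hμdef
  have e1 : Complex.exp (μ * ((c + δ):ℝ)) = Complex.exp (μ*c) * Complex.exp ((-((2*Real.pi*h*δ : ℝ):ℂ)) * Complex.I) := by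
    rw [← Complex.exp_add]; congr 1; push_cast [hμdef]; ring
  have e2 : Complex.exp (μ * ((c - δ):ℝ)) = Complex.exp (μ*c) * Complex.exp ((((2*Real.pi*h*δ : ℝ):ℂ)) * Complex.I) := by
    rw [← Complex.exp_add]; congr 1; push_cast [hμdef]; ring
  rw [e1, e2, Complex.exp_mul_I, Complex.exp_mul_I]
  rw [Complex.cos_neg, Complex.sin_neg]
  rw [← Complex.ofReal_sin, ← Complex.ofReal_cos]
  have hexp : Complex.exp (-(2*(Real.pi:ℂ)*Complex.I*h*c)) = Complex.exp (μ * c) := by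
    congr 1; rw [hμdef]; ring
  rw [hexp]
  field_simp [hμdef]
  rw [hμdef]; push_cast; field_simp; ring

lemma psi_int (h : ℤ) (l u A B : ℝ) :
    IntervalIntegrable (Set.indicator (Set.Icc l u) (gfun h)) volume A B := by
  rw [intervalIntegrable_iff]
  exact ((intervalIntegrable_iff.mp ((gfun_cont h).intervalIntegrable A B)).indicator
    measurableSet_Icc)

lemma L1 (q : ℕ) (hq : 0 < q) (K : ℤ) :
    Finset.Icc (1 - (q:ℤ)*K) ((q:ℤ)*K) =
      (Finset.Icc (-K) (K-1)).biUnion (fun k => Finset.Icc ((q:ℤ)*k+1) ((q:ℤ)*k+q)) := by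
  ext a
  simp only [Finset.mem_Icc, Finset.mem_biUnion]
  constructor
  · rintro ⟨h1, h2⟩
    refine ⟨(a-1)/q, ⟨?_, ?_⟩, ?_, ?_⟩ <;>
    · have hq' : (0:ℤ) < (q:ℤ) := by exact_mod_cast hq
      have e := Int.mul_ediv_add_emod (a-1) q
      have r1 := Int.emod_nonneg (a-1) (ne_of_gt hq')
      have r2 := Int.emod_lt_of_pos (a-1) hq'
      set k := (a-1)/(q:ℤ) with hk
      set r := (a-1) % (q:ℤ) with hr
      -- bounds: q*k = a-1-r
      nlinarith [mul_le_mul_of_nonneg_left (le_refl K) (le_of_lt hq')]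
  · rintro ⟨k, ⟨hk1, hk2⟩, h1, h2⟩
    have hq' : (0:ℤ) < (q:ℤ) := by exact_mod_cast hq
    constructor
    · nlinarith [mul_le_mul_of_nonneg_left hk1 (le_of_lt hq')]
    · nlinarith [mul_le_mul_of_nonneg_left hk2 (le_of_lt hq')]

lemma L1disj (q : ℕ) (hq : 0 < q) (K : ℤ) :
    Set.PairwiseDisjoint ↑(Finset.Icc (-K) (K-1))
      (fun k => Finset.Icc ((q:ℤ)*k+1) ((q:ℤ)*k+q)) := by
  intro k1 _ k2 _ hne
  have hq' : (0:ℤ) < (q:ℤ) := by exact_mod_cast hq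
  simp only [Function.onFun, Finset.disjoint_left, Finset.mem_Icc]
  rintro a ⟨h1, h2⟩ ⟨h3, h4⟩
  rcases lt_or_gt_of_ne hne with hlt | hlt
  · have : k1 + 1 ≤ k2 := hlt
    nlinarith [mul_le_mul_of_nonneg_left this (le_of_lt hq')]
  · have : k2 + 1 ≤ k1 := hlt
    nlinarith [mul_le_mul_of_nonneg_left this (le_of_lt hq')]

lemma L3 (h k : ℤ) (c δ : ℝ) :
    (∫ x in (0:ℝ)..1, Set.indicator (Set.Icc (c+k-δ) (c+k+δ)) (gfun h) x) =
      ∫ x in (-(k:ℝ))..(1-(k:ℝ)), Set.indicator (Set.Icc (c-δ) (c+δ)) (gfun h) x := by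
  have key : ∀ x : ℝ, Set.indicator (Set.Icc (c+k-δ) (c+k+δ)) (gfun h) x
      = Set.indicator (Set.Icc (c-δ) (c+δ)) (gfun h) (x - k) := by
    intro x
    have hmem : x ∈ Set.Icc (c+k-δ) (c+k+δ) ↔ (x - k) ∈ Set.Icc (c-δ) (c+δ) := by
      simp only [Set.mem_Icc]; constructor <;> intro hh <;> constructor <;> linarith [hh.1, hh.2]
    have hg : gfun h x = gfun h (x - k) := by
      conv_lhs => rw [show x = (x - k) + k by ring, gfun_per]
    by_cases hx : x ∈ Set.Icc (c+k-δ) (c+k+δ)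
    · rw [Set.indicator_of_mem hx, Set.indicator_of_mem (hmem.mp hx), hg]
    · rw [Set.indicator_of_notMem hx, Set.indicator_of_notMem (fun hc => hx (hmem.mpr hc))]
  simp_rw [key]
  rw [intervalIntegral.integral_comp_sub_right]
  norm_num

lemma L4 (h : ℤ) (K : ℤ) (hK : 1 ≤ K) (l u : ℝ) :
    ∑ k ∈ Finset.Icc (-K) (K-1), (∫ x in (-(k:ℝ))..(1-(k:ℝ)), Set.indicator (Set.Icc l u) (gfun h) x)
      = ∫ x in ((1-K : ℤ):ℝ)..(((K+1 : ℤ)):ℝ), Set.indicator (Set.Icc l u) (gfun h) x := by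
  set a : ℕ → ℝ := fun i => ((1-K : ℤ):ℝ) + i with ha
  have hN : (((2*K).toNat : ℕ) : ℝ) = 2*(K:ℝ) := by
    have := Int.toNat_of_nonneg (show (0:ℤ) ≤ 2*K by omega)
    exact_mod_cast congrArg (Int.cast : ℤ → ℝ) this
  have step : ∑ k ∈ Finset.Icc (-K) (K-1), (∫ x in (-(k:ℝ))..(1-(k:ℝ)), Set.indicator (Set.Icc l u) (gfun h) x)
      = ∑ i ∈ Finset.range (2*K).toNat,
          ∫ x in (a i)..(a (i+1)), Set.indicator (Set.Icc l u) (gfun h) x := by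
    apply Finset.sum_nbij' (i := fun k => (K-1-k).toNat) (j := fun i => K-1-(i:ℤ))
    · intro k hk; simp only [Finset.mem_Icc] at hk; simp only [Finset.mem_range]; omega
    · intro i hi; simp only [Finset.mem_range] at hi; simp only [Finset.mem_Icc]; omega
    · intro k hk; simp only [Finset.mem_Icc] at hk; omega
    · intro i hi; simp only [Finset.mem_range] at hi; omega
    · intro k hk
      simp only [Finset.mem_Icc] at hk
      have hnn : (0:ℤ) ≤ K-1-k := by omega
      have hcast : (((K-1-k).toNat : ℕ) : ℝ) = (K:ℝ)-1-(k:ℝ) := by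
        have := Int.toNat_of_nonneg hnn
        have := congrArg (Int.cast : ℤ → ℝ) this
        push_cast at this
        exact this
      simp only [ha]
      congr 1
      · push_cast [hcast]; ring
      · push_cast [hcast]; ring
  rw [step]
  have hsum := intervalIntegral.sum_integral_adjacent_intervals
    (a := a) (n := (2*K).toNat)
    (f := Set.indicator (Set.Icc l u) (gfun h)) (μ := volume)
    (fun k _ => psi_int h l u _ _)
  rw [hsum]
  congr 1
  · simp [ha]
  · simp only [ha]; push_cast [hN]; ring
lemma L5 (h : ℤ) (A B l u : ℝ) (h1 : A < l) (h2 : l ≤ u) (h3 : u ≤ B) :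
    (∫ x in A..B, Set.indicator (Set.Icc l u) (gfun h) x) = ∫ x in l..u, gfun h x := by
  have hAB : A ≤ B := by linarith
  rw [intervalIntegral.integral_of_le hAB, intervalIntegral.integral_of_le h2]
  rw [MeasureTheory.setIntegral_indicator measurableSet_Icc]
  have : Set.Ioc A B ∩ Set.Icc l u = Set.Icc l u := by
    apply Set.inter_eq_self_of_subset_right
    intro x hx
    exact ⟨lt_of_lt_of_le h1 hx.1, le_trans hx.2 h3⟩
  rw [this, MeasureTheory.integral_Icc_eq_integral_Ioc]

noncomputable def Fterm (h : ℤ) (δ : ℝ) (q : ℕ) (a : ℤ) : ℂ :=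
  ∫ x in (0:ℝ)..1,
    (if Int.gcd a q = 1 then
      Set.indicator (Set.Icc ((a:ℝ)/q - δ) ((a:ℝ)/q + δ)) (gfun h) x else 0)

lemma per_q (h : ℤ) (δ : ℝ) (hδ : 0 < δ) (q : ℕ) (hq : 0 < q) :
    ∑ a ∈ Finset.Icc (1 - (q:ℤ)*(⌈δ⌉+1)) ((q:ℤ)*(⌈δ⌉+1)), Fterm h δ q a
      = ∑ a ∈ Finset.Icc 1 q,
          (if Nat.gcd a q = 1 then ∫ x in ((a:ℝ)/q - δ)..((a:ℝ)/q + δ), gfun h x else 0) := by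
  set K : ℤ := ⌈δ⌉ + 1 with hKdef
  have hK1 : 1 ≤ K := by
    have : (0:ℤ) < ⌈δ⌉ := Int.ceil_pos.mpr hδ
    omega
  have hδK : δ ≤ (⌈δ⌉ : ℝ) := Int.le_ceil δ
  have hq' : (0:ℝ) < (q:ℝ) := by exact_mod_cast hq
  rw [L1 q hq K, Finset.sum_biUnion (L1disj q hq K)]
  have shift : ∀ k, ∑ a ∈ Finset.Icc ((q:ℤ)*k+1) ((q:ℤ)*k+q), Fterm h δ q a
      = ∑ a₀ ∈ Finset.Icc (1:ℤ) (q:ℤ), Fterm h δ q ((q:ℤ)*k + a₀) := by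
    intro k
    rw [← Finset.map_add_left_Icc, Finset.sum_map]
    rfl
  simp_rw [shift]
  rw [Finset.sum_comm]
  have collapse : ∀ a₀ ∈ Finset.Icc (1:ℤ) (q:ℤ),
      ∑ k ∈ Finset.Icc (-K) (K-1), Fterm h δ q ((q:ℤ)*k + a₀)
        = (if Int.gcd a₀ q = 1 then ∫ x in ((a₀:ℝ)/q - δ)..((a₀:ℝ)/q + δ), gfun h x else 0) := by
    intro a₀ ha₀
    simp only [Finset.mem_Icc] at ha₀
    have hgcd : ∀ k : ℤ, Int.gcd ((q:ℤ)*k + a₀) q = Int.gcd a₀ q := by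
      intro k; rw [add_comm]; exact gcd_shift a₀ k q
    by_cases hg : Int.gcd a₀ q = 1
    · rw [if_pos hg]
      set c : ℝ := (a₀:ℝ)/q with hc
      have hc0 : 0 < c := by
        apply div_pos _ hq'
        exact_mod_cast lt_of_lt_of_le zero_lt_one (by exact_mod_cast ha₀.1)
      have hc1 : c ≤ 1 := by
        rw [hc, div_le_one hq']
        exact_mod_cast ha₀.2
      have hterm : ∀ k : ℤ, Fterm h δ q ((q:ℤ)*k + a₀)
          = ∫ x in (-(k:ℝ))..(1-(k:ℝ)), Set.indicator (Set.Icc (c-δ) (c+δ)) (gfun h) x := by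
        intro k
        unfold Fterm
        have hcast : (((q:ℤ)*k + a₀ : ℤ):ℝ)/q = c + k := by
          rw [hc]; push_cast; field_simp; ring
        simp only [hgcd, hg, eq_self_iff_true, if_true]
        simp only [show ((((q:ℤ)*k + a₀ : ℤ):ℝ)/q - δ) = c + k - δ by rw [hcast],
            show ((((q:ℤ)*k + a₀ : ℤ):ℝ)/q + δ) = c + k + δ by rw [hcast]]
        exact L3 h k c δ
      simp_rw [hterm]
      rw [L4 h K hK1]
      apply L5
      · push_cast
        have : (1:ℝ) - K = -(⌈δ⌉:ℝ) := by rw [hKdef]; push_cast; ring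
        rw [this]
        linarith
      · linarith
      · push_cast
        have : ((K:ℝ) + 1) = (⌈δ⌉:ℝ) + 2 := by rw [hKdef]; push_cast; ring
        rw [this]
        linarith
    · rw [if_neg hg, Finset.sum_eq_zero]
      intro k _
      unfold Fterm
      simp [hgcd, hg]
  rw [Finset.sum_congr rfl collapse]
  -- ℤ to ℕ reindexing
  apply Finset.sum_nbij' (i := Int.toNat) (j := (Nat.cast : ℕ → ℤ))
  · intro a ha; simp only [Finset.mem_Icc] at ha ⊢; omega
  · intro a ha; simp only [Finset.mem_Icc] at ha ⊢; omega
  · intro a ha; simp only [Finset.mem_Icc] at ha; omega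
  · intro a ha; simp only [Finset.mem_Icc] at ha; omega
  · intro a ha
    simp only [Finset.mem_Icc] at ha
    have h1 : ((a.toNat : ℤ)) = a := Int.toNat_of_nonneg (by omega)
    rw [← h1]
    push_cast
    rfl

lemma card_coprime (q : ℕ) (X : ℂ) :
    ∑ a ∈ Finset.Icc 1 q, (if Nat.gcd a q = 1 then X else 0) = (Nat.totient q : ℂ) * X := by
  rw [← Finset.sum_filter, Finset.sum_const, nsmul_eq_mul]
  congr 2
  have h1 : Finset.Icc 1 q = Finset.Ico 1 (1 + q) := by
    rw [Nat.add_comm, Finset.Ico_add_one_right_eq_Icc]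
  rw [h1, ← Nat.filter_coprime_Ico_eq_totient q 1]
  congr 1
  apply Finset.filter_congr
  intro a _
  simp only [Nat.Coprime, eq_iff_iff]
  rw [Nat.gcd_comm]

set_option maxHeartbeats 1000000 in
lemma stepAB (𝒬 : Finset ℕ) (h𝒬pos : ∀ q ∈ 𝒬, 0 < q) (δ : ℝ) (hδ : 0 < δ) (h : ℤ) :
    (∫ x in (0:ℝ)..1, (jutilaApprox 𝒬 δ x : ℂ) * gfun h x)
      = ((2*δ*∑ q ∈ 𝒬, (Nat.totient q : ℝ) : ℝ) : ℂ)⁻¹ *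
          ∑ q ∈ 𝒬, ∑ a ∈ Finset.Icc (1 - (q:ℤ)*(⌈δ⌉+1)) ((q:ℤ)*(⌈δ⌉+1)), Fterm h δ q a := by
  set K : ℤ := ⌈δ⌉ + 1 with hKdef
  set C : ℝ := 2*δ*∑ q ∈ 𝒬, (Nat.totient q : ℝ) with hCdef
  set S : ℕ → Finset ℤ := fun q => Finset.Icc (1 - (q:ℤ)*K) ((q:ℤ)*K) with hSdef
  have hceil : δ ≤ (⌈δ⌉:ℝ) := Int.le_ceil δ
  have hKR : (δ:ℝ) + 1 ≤ ((K:ℤ):ℝ) := by rw [hKdef]; push_cast; linarith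
  have ind_mul : ∀ (s : Set ℝ) (x : ℝ),
      ((Set.indicator s (fun _ => (1:ℝ)) x : ℝ) : ℂ) * gfun h x = Set.indicator s (gfun h) x := by
    intro s x
    by_cases hx : x ∈ s <;> simp [hx]
  have vanish : ∀ q ∈ 𝒬, ∀ x ∈ Set.Icc (0:ℝ) 1, ∀ a ∉ S q,
      (if Int.gcd a q = 1 then
        Set.indicator (Set.Icc ((a:ℝ)/q - δ) ((a:ℝ)/q + δ)) (fun _ => (1:ℝ)) x else 0) = 0 := by
    intro q hq x hx a ha
    have hq0 : 0 < q := h𝒬pos q hq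
    have hq' : (0:ℝ) < (q:ℝ) := by exact_mod_cast hq0
    simp only [hSdef, Finset.mem_Icc, not_and_or, not_le] at ha
    suffices hnot : x ∉ Set.Icc ((a:ℝ)/q - δ) ((a:ℝ)/q + δ) by
      rw [Set.indicator_of_notMem hnot]
      simp
    simp only [Set.mem_Icc, not_and_or, not_le]
    rcases ha with ha | ha
    · right
      have haR : (a:ℝ) ≤ -((q:ℝ)*K) := by
        have h2 : a ≤ -((q:ℤ)*K) := by omega
        exact_mod_cast h2
      have hdiv : (a:ℝ)/q ≤ -((K:ℤ):ℝ) := by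
        rw [div_le_iff₀ hq']
        nlinarith
      have hx0 : (0:ℝ) ≤ x := hx.1
      nlinarith
    · left
      have haR : (q:ℝ)*((K:ℤ):ℝ) + 1 ≤ (a:ℝ) := by
        have h2 : (q:ℤ)*K + 1 ≤ a := by omega
        exact_mod_cast h2
      have hdiv : ((K:ℤ):ℝ) + 1/q ≤ (a:ℝ)/q := by
        rw [le_div_iff₀ hq']
        have : (((K:ℤ):ℝ) + 1/q)*q = (q:ℝ)*((K:ℤ):ℝ) + 1 := by field_simp
        rw [this]; exact haR
      have hx1 : x ≤ 1 := hx.2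
      have hqinv : (0:ℝ) < 1/q := by positivity
      nlinarith
  have hEq : Set.EqOn (fun x => (jutilaApprox 𝒬 δ x : ℂ) * gfun h x)
      (fun x => ((C:ℝ):ℂ)⁻¹ * ∑ q ∈ 𝒬, ∑ a ∈ S q,
        (if Int.gcd a q = 1 then
          Set.indicator (Set.Icc ((a:ℝ)/q - δ) ((a:ℝ)/q + δ)) (gfun h) x else 0)) (Set.uIcc 0 1) := by
    intro x hx
    rw [Set.uIcc_of_le zero_le_one] at hx
    simp only
    have h1 : jutilaApprox 𝒬 δ x = C⁻¹ * ∑ q ∈ 𝒬, ∑ a ∈ S q,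
        (if Int.gcd a q = 1 then
          Set.indicator (Set.Icc ((a:ℝ)/q - δ) ((a:ℝ)/q + δ)) (fun _ => (1:ℝ)) x else 0) := by
      unfold jutilaApprox
      rw [hCdef]
      congr 1
      apply Finset.sum_congr rfl
      intro q hq
      exact tsum_eq_sum (vanish q hq x hx)
    rw [h1]
    push_cast
    rw [mul_assoc]
    congr 1
    rw [Finset.sum_mul]
    refine Finset.sum_congr rfl fun q _ => ?_
    rw [Finset.sum_mul]
    refine Finset.sum_congr rfl fun a _ => ?_
    split_ifs with hgcd
    · exact ind_mul _ x
    · simp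
  have hint : ∀ (q : ℕ) (a : ℤ), IntervalIntegrable (fun x =>
      if Int.gcd a q = 1 then
        Set.indicator (Set.Icc ((a:ℝ)/q - δ) ((a:ℝ)/q + δ)) (gfun h) x else 0) volume 0 1 := by
    intro q a
    by_cases hgcd : Int.gcd a q = 1
    · simpa [hgcd] using psi_int h ((a:ℝ)/q - δ) ((a:ℝ)/q + δ) 0 1
    · simp only [hgcd, if_false]
      exact intervalIntegrable_const
  have hint2 : ∀ q : ℕ, IntervalIntegrable (fun x => ∑ a ∈ S q,
      (if Int.gcd a q = 1 then
        Set.indicator (Set.Icc ((a:ℝ)/q - δ) ((a:ℝ)/q + δ)) (gfun h) x else 0)) volume 0 1 := by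
    intro q
    have := IntervalIntegrable.sum (μ := volume) (a := 0) (b := 1) (S q)
      (f := fun (a : ℤ) (x : ℝ) =>
        if Int.gcd a q = 1 then
          Set.indicator (Set.Icc ((a:ℝ)/q - δ) ((a:ℝ)/q + δ)) (gfun h) x else 0)
      (fun a _ => hint q a)
    have heq : (∑ a ∈ S q, fun (x:ℝ) =>
        (if Int.gcd a q = 1 then
          Set.indicator (Set.Icc ((a:ℝ)/q - δ) ((a:ℝ)/q + δ)) (gfun h) x else 0))
        = fun (x:ℝ) => ∑ a ∈ S q,
          (if Int.gcd a q = 1 then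
            Set.indicator (Set.Icc ((a:ℝ)/q - δ) ((a:ℝ)/q + δ)) (gfun h) x else 0) := by
      funext x
      simp
    rwa [heq] at this
  rw [intervalIntegral.integral_congr hEq, intervalIntegral.integral_const_mul]
  congr 1
  rw [intervalIntegral.integral_finset_sum (fun q _ => hint2 q)]
  refine Finset.sum_congr rfl fun q hq => ?_
  rw [intervalIntegral.integral_finset_sum (fun a _ => hint q a)]
  rfl

/-- The Fourier coefficients of Jutila's approximant: the 0-th coefficient is `1`,
and for `h ≠ 0` the `h`-th coefficient is `(1/L) ∑_{q ∈ 𝒬} c_q(h) · sin(2πhδ)/(2πhδ)`. -/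
theorem jutila_fourier_coefficients
    (𝒬 : Finset ℕ) (h𝒬 : 𝒬.Nonempty) (h𝒬pos : ∀ q ∈ 𝒬, 0 < q)
    (δ : ℝ) (hδ : 0 < δ) :
    (∫ x in (0:ℝ)..1, jutilaApprox 𝒬 δ x) = 1 ∧
    ∀ h : ℤ, h ≠ 0 →
      (∫ x in (0:ℝ)..1,
          (jutilaApprox 𝒬 δ x : ℂ) * Complex.exp (-(2 * Real.pi * Complex.I * h * x))) =
        (∑ q ∈ 𝒬, (Nat.totient q : ℂ))⁻¹ *
          ∑ q ∈ 𝒬, ramanujanSum q h *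
            ((Real.sin (2 * Real.pi * h * δ) / (2 * Real.pi * h * δ) : ℝ) : ℂ) := by
  have hL : (0:ℝ) < ∑ q ∈ 𝒬, (Nat.totient q : ℝ) := by
    apply Finset.sum_pos _ h𝒬
    intro q hq
    exact_mod_cast Nat.totient_pos.mpr (h𝒬pos q hq)
  set L : ℝ := ∑ q ∈ 𝒬, (Nat.totient q : ℝ) with hLdef
  have master : ∀ h : ℤ,
      (∫ x in (0:ℝ)..1, (jutilaApprox 𝒬 δ x : ℂ) * gfun h x)
        = ((2*δ*L : ℝ) : ℂ)⁻¹ * ∑ q ∈ 𝒬, ∑ a ∈ Finset.Icc 1 q,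
            (if Nat.gcd a q = 1 then ∫ x in ((a:ℝ)/q - δ)..((a:ℝ)/q + δ), gfun h x else 0) := by
    intro h
    rw [stepAB 𝒬 h𝒬pos δ hδ h]
    congr 1
    exact Finset.sum_congr rfl fun q hq => per_q h δ hδ q (h𝒬pos q hq)
  constructor
  · -- zeroth coefficient
    have h0 : ∀ x : ℝ, gfun 0 x = 1 := by intro x; simp [gfun]
    have e1 : (∫ x in (0:ℝ)..1, (jutilaApprox 𝒬 δ x : ℂ) * gfun 0 x)
        = ((∫ x in (0:ℝ)..1, jutilaApprox 𝒬 δ x : ℝ) : ℂ) := by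
      simp_rw [h0, mul_one]
      exact intervalIntegral.integral_ofReal
    have e2 := master 0
    rw [e1] at e2
    have inner : ∀ c : ℝ, (∫ x in (c-δ)..(c+δ), gfun 0 x) = ((2*δ : ℝ) : ℂ) := by
      intro c
      simp_rw [h0]
      rw [intervalIntegral.integral_const]
      rw [Complex.real_smul]
      push_cast
      ring
    simp_rw [inner] at e2
    have e3 : ∀ q ∈ 𝒬, ∑ a ∈ Finset.Icc 1 q, (if Nat.gcd a q = 1 then ((2*δ:ℝ):ℂ) else 0)
        = (Nat.totient q : ℂ) * ((2*δ:ℝ):ℂ) := fun q _ => card_coprime q _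
    rw [Finset.sum_congr rfl e3] at e2
    have e4 : ∑ q ∈ 𝒬, (Nat.totient q : ℂ) * ((2*δ:ℝ):ℂ) = ((2*δ*L : ℝ) : ℂ) := by
      rw [← Finset.sum_mul, hLdef]
      push_cast
      ring
    rw [e4, inv_mul_cancel₀ (by exact_mod_cast (by positivity : (2*δ*L : ℝ) ≠ 0))] at e2
    exact_mod_cast e2
  · intro h hh
    have hme : (∫ x in (0:ℝ)..1,
        (jutilaApprox 𝒬 δ x : ℂ) * Complex.exp (-(2 * Real.pi * Complex.I * h * x)))
        = ∫ x in (0:ℝ)..1, (jutilaApprox 𝒬 δ x : ℂ) * gfun h x := rfl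
    rw [hme, master h]
    have hterm : ∀ (q : ℕ) (a : ℕ),
        Complex.exp (-(2*(Real.pi:ℂ)*Complex.I*h*(((a:ℝ)/(q:ℝ) : ℝ):ℂ)))
          = Complex.exp (-(2 * Real.pi * Complex.I * a * h / q)) := by
      intro q a
      congr 1
      push_cast
      ring
    have e5 : ∀ q ∈ 𝒬, ∑ a ∈ Finset.Icc 1 q,
        (if Nat.gcd a q = 1 then ∫ x in ((a:ℝ)/q - δ)..((a:ℝ)/q + δ), gfun h x else 0)
        = ((Real.sin (2*Real.pi*h*δ) / (Real.pi*h) : ℝ) : ℂ) * ramanujanSum q h := by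
      intro q _
      unfold ramanujanSum
      rw [Finset.mul_sum]
      apply Finset.sum_congr rfl
      intro a _
      split_ifs with hg
      · rw [gfun_integral_ne h hh ((a:ℝ)/q) δ, hterm q a]
      · rw [mul_zero]
    rw [Finset.sum_congr rfl e5, ← Finset.mul_sum]
    have scalarR : (2*δ*L)⁻¹ * (Real.sin (2*Real.pi*h*δ) / (Real.pi*h))
        = L⁻¹ * (Real.sin (2*Real.pi*h*δ) / (2*Real.pi*h*δ)) := by
      have hhR : ((h:ℝ)) ≠ 0 := by exact_mod_cast hh
      have hLne : L ≠ 0 := ne_of_gt hL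
      field_simp
      try exact Or.inl trivial
    have scalarC := congrArg (fun r : ℝ => (r : ℂ)) scalarR
    push_cast at scalarC
    calc (((2*δ*L : ℝ)):ℂ)⁻¹ * (((Real.sin (2*Real.pi*h*δ) / (Real.pi*h) : ℝ) : ℂ) * ∑ q ∈ 𝒬, ramanujanSum q h)
        = ((((2*δ*L : ℝ)):ℂ)⁻¹ * ((Real.sin (2*Real.pi*h*δ) / (Real.pi*h) : ℝ) : ℂ)) * ∑ q ∈ 𝒬, ramanujanSum q h := by ring
      _ = (((L:ℝ):ℂ)⁻¹ * ((Real.sin (2*Real.pi*h*δ) / (2*Real.pi*h*δ) : ℝ) : ℂ)) * ∑ q ∈ 𝒬, ramanujanSum q h := by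
          push_cast
          rw [scalarC]
      _ = (∑ q ∈ 𝒬, (Nat.totient q : ℂ))⁻¹ *
          ∑ q ∈ 𝒬, ramanujanSum q h * ((Real.sin (2 * Real.pi * h * δ) / (2 * Real.pi * h * δ) : ℝ) : ℂ) := by
          rw [hLdef]
          push_cast
          rw [← Finset.sum_mul]
          ring
end

section
/- Let a, b : ℤ → ℂ be finitely supported functions and set A(x) = Σ_{n∈ℤ} a(n) e^{2πinx} and B(x) = Σ_{m∈ℤ} b(m) e^{−2πimx}. Let 𝒬 be a finite nonempty set of positive integers, δ > 0, and let Ĩ_{𝒬,δ} be the Jutila approximant. Then Σ_{n∈ℤ} a(n) b(n) = ∫₀¹ A(x) B(x) dx, and |Σ_{n∈ℤ} a(n) b(n) − ∫₀¹ Ĩ_{𝒬,δ}(x) A(x) B(x) dx| ≤ (∫₀¹ |1 − Ĩ_{𝒬,δ}(x)|² dx)^{1/2} · (sup_{x∈[0,1]} |A(x)|) · (Σ_{m∈ℤ} |b(m)|²)^{1/2}. -/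
open MeasureTheory

/-- `e(θ) = e^{2πiθ}`. -/
noncomputable def e (θ : ℝ) : ℂ := Complex.exp (2 * Real.pi * Complex.I * θ)

noncomputable def jutilaFin (𝒬 : Finset ℕ) (δ : ℝ) (x : ℝ) : ℝ :=
  (2 * δ * ∑ q ∈ 𝒬, (Nat.totient q : ℝ))⁻¹ *
    ∑ q ∈ 𝒬, ∑ a ∈ Finset.Icc (-⌈(q:ℝ)*(1+δ)⌉) ⌈(q:ℝ)*(1+δ)⌉,
      if Int.gcd a q = 1 then
        Set.indicator (Set.Icc ((a : ℝ) / q - δ) ((a : ℝ) / q + δ)) (fun _ => (1 : ℝ)) x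
      else 0

lemma jutilaFin_measurable (𝒬 : Finset ℕ) (δ : ℝ) : Measurable (jutilaFin 𝒬 δ) := by
  unfold jutilaFin
  apply Measurable.const_mul
  apply Finset.measurable_sum
  intro q _
  apply Finset.measurable_sum
  intro i _
  split_ifs
  · exact Measurable.indicator measurable_const measurableSet_Icc
  · exact measurable_const

lemma jutilaApprox_eq_fin (𝒬 : Finset ℕ) (h𝒬pos : ∀ q ∈ 𝒬, 0 < q) (δ : ℝ) (hδ : 0 < δ)
    {x : ℝ} (hx : x ∈ Set.Ioc (0:ℝ) 1) : jutilaApprox 𝒬 δ x = jutilaFin 𝒬 δ x := by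
  unfold jutilaApprox jutilaFin
  congr 1
  refine Finset.sum_congr rfl fun q hq => ?_
  refine tsum_eq_sum ?_
  intro a hab
  split_ifs with h
  swap
  · rfl
  rw [Set.indicator_of_notMem]
  intro hmem
  rw [Set.mem_Icc] at hmem
  have hq0 : (0:ℝ) < q := by exact_mod_cast h𝒬pos q hq
  have hN : (q:ℝ) * (1 + δ) ≤ (⌈(q:ℝ)*(1+δ)⌉ : ℝ) := Int.le_ceil _
  rw [Finset.mem_Icc, not_and_or, not_le, not_le] at hab
  have h1 : ((a:ℝ)/q - δ) ≤ x := hmem.1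
  have h2 : x ≤ (a:ℝ)/q + δ := hmem.2
  have hx1 : 0 < x := hx.1
  have hx2 : x ≤ 1 := hx.2
  rcases hab with hab | hab
  · have : (a:ℝ) < -((⌈(q:ℝ)*(1+δ)⌉ : ℝ)) := by exact_mod_cast hab
    have hdiv : x - δ ≤ (a:ℝ)/q := by linarith
    rw [le_div_iff₀ hq0] at hdiv
    nlinarith
  · have : ((⌈(q:ℝ)*(1+δ)⌉ : ℝ)) < (a:ℝ) := by exact_mod_cast hab
    have hdiv : (a:ℝ)/q ≤ x + δ := by linarith
    rw [div_le_iff₀ hq0] at hdiv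
    nlinarith

lemma jutilaFin_bound (𝒬 : Finset ℕ) (δ : ℝ) :
    ∃ C : ℝ, 0 ≤ C ∧ ∀ x, |jutilaFin 𝒬 δ x| ≤ C := by
  refine ⟨|(2 * δ * ∑ q ∈ 𝒬, (Nat.totient q : ℝ))⁻¹| *
    ∑ q ∈ 𝒬, ((Finset.Icc (-⌈(q:ℝ)*(1+δ)⌉) ⌈(q:ℝ)*(1+δ)⌉).card : ℝ), ?_, ?_⟩
  · positivity
  intro x
  unfold jutilaFin
  rw [abs_mul]
  refine mul_le_mul_of_nonneg_left ?_ (abs_nonneg _)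
  refine (Finset.abs_sum_le_sum_abs _ _).trans ?_
  refine Finset.sum_le_sum fun q _ => ?_
  refine (Finset.abs_sum_le_sum_abs _ _).trans ?_
  have hterm : ∀ a ∈ Finset.Icc (-⌈(q:ℝ)*(1+δ)⌉) ⌈(q:ℝ)*(1+δ)⌉,
      |if Int.gcd a q = 1 then
        Set.indicator (Set.Icc ((a : ℝ) / q - δ) ((a : ℝ) / q + δ)) (fun _ => (1 : ℝ)) x
      else 0| ≤ 1 := by
    intro a _
    split_ifs
    · rw [Set.indicator_apply]
      split_ifs <;> norm_num
    · norm_num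
  calc _ ≤ ∑ _a ∈ Finset.Icc (-⌈(q:ℝ)*(1+δ)⌉) ⌈(q:ℝ)*(1+δ)⌉, (1:ℝ) :=
        Finset.sum_le_sum hterm
  _ = _ := by simp

lemma e_cont : Continuous e := by unfold e; fun_prop

lemma e_add (s t : ℝ) : e (s + t) = e s * e t := by
  unfold e; rw [← Complex.exp_add]; congr 1; push_cast; ring

lemma e_norm (t : ℝ) : ‖e t‖ = 1 := by
  unfold e
  rw [show (2 * Real.pi * Complex.I * t : ℂ) = (2 * Real.pi * t : ℝ) * Complex.I by push_cast; ring]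
  exact Complex.norm_exp_ofReal_mul_I _

lemma conj_e (t : ℝ) : starRingEnd ℂ (e t) = e (-t) := by
  unfold e
  rw [← Complex.exp_conj]; congr 1
  simp only [map_mul, Complex.conj_ofReal, Complex.conj_I, map_ofNat]
  push_cast; ring

lemma integral_e (k : ℤ) : ∫ x in (0:ℝ)..1, e (k * x) = if k = 0 then 1 else 0 := by
  have h : ∀ x : ℝ, e ((k:ℝ) * x) = Complex.exp ((2 * Real.pi * Complex.I * k) * x) := by
    intro x; unfold e; congr 1; push_cast; ring
  simp only [h]
  rcases eq_or_ne k 0 with hk | hk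
  · simp [hk]
  · have hc : (2 * Real.pi * Complex.I * k : ℂ) ≠ 0 := by
      simp [Real.pi_ne_zero, Complex.I_ne_zero, hk]
    rw [integral_exp_mul_complex hc]
    simp only [if_neg hk]
    rw [show (2 * Real.pi * Complex.I * k * (1:ℝ) : ℂ) = k * (2 * Real.pi * Complex.I) by
      push_cast; ring]
    rw [Complex.exp_int_mul_two_pi_mul_I]
    simp

lemma integral_orth (n m : ℤ) :
    ∫ x in (0:ℝ)..1, e (n * x) * e (-(m * x)) = if n = m then 1 else 0 := by
  have h : ∀ x : ℝ, e ((n:ℝ) * x) * e (-((m:ℝ) * x)) = e (((n - m : ℤ) : ℝ) * x) := by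
    intro x; rw [← e_add]; congr 1; push_cast; ring
  simp only [h, integral_e]
  simp [sub_eq_zero]

lemma biSup_aux (f : ℝ → ℝ) (Ca : ℝ) (hCa : ∀ x, ‖f x‖ ≤ Ca) :
    ∀ x ∈ Set.Icc (0:ℝ) 1, f x ≤ ⨆ y ∈ Set.Icc (0:ℝ) 1, f y := by
  intro x hx
  have hbd : BddAbove (Set.range fun y => ⨆ (_ : y ∈ Set.Icc (0:ℝ) 1), f y) := by
    refine ⟨max Ca 0, ?_⟩
    rintro z ⟨y, rfl⟩
    by_cases hy : y ∈ Set.Icc (0:ℝ) 1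
    · simp only [ciSup_pos (p := y ∈ Set.Icc (0:ℝ) 1) (f := fun _ => f y) hy]
      exact le_max_of_le_left ((le_abs_self _).trans (hCa y))
    · simp [hy, Real.iSup_of_isEmpty]
  calc f x = ⨆ (_ : x ∈ Set.Icc (0:ℝ) 1), f x :=
        (ciSup_pos (p := x ∈ Set.Icc (0:ℝ) 1) (f := fun _ => f x) hx).symm
  _ ≤ _ := le_ciSup hbd x

/-- Detecting the diagonal with Jutila's circle method: with
`A(x) = ∑_n a(n) e(nx)` and `B(x) = ∑_m b(m) e(-mx)`, one has
`∑_n a(n)b(n) = ∫₀¹ A(x)B(x) dx`, and by Cauchy–Schwarz and Parseval the error of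
replacing the measure `dx` by `Ĩ_{𝒬,δ}(x) dx` is at most
`(∫₀¹ |1 - Ĩ_{𝒬,δ}|²)^{1/2} · sup_{[0,1]} |A| · (∑_m |b(m)|²)^{1/2}`. -/
theorem jutila_diagonal_detection
    (a b : ℤ → ℂ) (ha : (Function.support a).Finite) (hb : (Function.support b).Finite)
    (𝒬 : Finset ℕ) (h𝒬 : 𝒬.Nonempty) (h𝒬pos : ∀ q ∈ 𝒬, 0 < q)
    (δ : ℝ) (hδ : 0 < δ) :
    (∑' n : ℤ, a n * b n) =
      (∫ x in (0:ℝ)..1,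
        (∑' n : ℤ, a n * e (n * x)) * (∑' m : ℤ, b m * e (-(m * x)))) ∧
    ‖(∑' n : ℤ, a n * b n) -
        ∫ x in (0:ℝ)..1, (jutilaApprox 𝒬 δ x : ℂ) *
          ((∑' n : ℤ, a n * e (n * x)) * (∑' m : ℤ, b m * e (-(m * x))))‖ ≤
      Real.sqrt (∫ x in (0:ℝ)..1, |1 - jutilaApprox 𝒬 δ x| ^ 2) *
        (⨆ x ∈ Set.Icc (0:ℝ) 1, ‖∑' n : ℤ, a n * e (n * x)‖) *
        Real.sqrt (∑' m : ℤ, ‖b m‖ ^ 2) := by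
  classical
  set μ : Measure ℝ := volume.restrict (Set.Ioc (0:ℝ) 1) with hμ
  haveI hfin : IsFiniteMeasure μ := by
    constructor
    rw [hμ, Measure.restrict_apply_univ, Real.volume_Ioc]
    exact ENNReal.ofReal_lt_top
  set s := ha.toFinset with hs
  set t := hb.toFinset with ht
  set A : ℝ → ℂ := fun x => ∑ n ∈ s, a n * e (n * x) with hA
  set B : ℝ → ℂ := fun x => ∑ m ∈ t, b m * e (-(m * x)) with hB
  have hAts : ∀ x : ℝ, (∑' n : ℤ, a n * e (n * x)) = A x := by
    intro x
    refine tsum_eq_sum fun n hn => ?_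
    have : a n = 0 := by
      by_contra h; exact hn (ha.mem_toFinset.mpr h)
    simp [this]
  have hBts : ∀ x : ℝ, (∑' m : ℤ, b m * e (-(m * x))) = B x := by
    intro x
    refine tsum_eq_sum fun m hm => ?_
    have : b m = 0 := by
      by_contra h; exact hm (hb.mem_toFinset.mpr h)
    simp [this]
  have hAcont : Continuous A :=
    continuous_finset_sum _ fun n _ => continuous_const.mul (e_cont.comp (by fun_prop))
  have hBcont : Continuous B :=
    continuous_finset_sum _ fun m _ => continuous_const.mul (e_cont.comp (by fun_prop))
  have orth' : ∀ n m : ℤ, ∫ x, e (n*x) * e (-(m*x)) ∂μ = if n = m then 1 else 0 := by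
    intro n m
    rw [hμ, ← intervalIntegral.integral_of_le (zero_le_one)]
    exact integral_orth n m
  have eint : ∀ (n m : ℤ), Integrable (fun x => e (n*x) * e (-(m*x))) μ := by
    intro n m
    exact ((e_cont.comp (by fun_prop : Continuous fun x : ℝ => (n:ℝ)*x)).mul
      (e_cont.comp (by fun_prop : Continuous fun x : ℝ => -((m:ℝ)*x)))).integrableOn_Ioc
  -- Part 1
  have part1 : ∫ x, A x * B x ∂μ = ∑ n ∈ s, a n * b n := by
    have expand : ∀ x : ℝ, A x * B x
        = ∑ n ∈ s, ∑ m ∈ t, (a n * b m) * (e (n*x) * e (-(m*x))) := by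
      intro x
      rw [hA, hB]
      rw [Finset.sum_mul_sum]
      exact Finset.sum_congr rfl fun n _ => Finset.sum_congr rfl fun m _ => by ring
    simp only [expand]
    rw [integral_finset_sum _ fun n _ => integrable_finset_sum _
      (fun m _ => ((eint n m).const_mul _))]
    have hrw : ∀ n ∈ s, ∫ x, ∑ m ∈ t, (a n * b m) * (e (n*x) * e (-(m*x))) ∂μ
        = ∑ m ∈ t, (a n * b m) * (if n = m then 1 else 0) := by
      intro n _
      rw [integral_finset_sum _ fun m _ => (eint n m).const_mul _]
      exact Finset.sum_congr rfl fun m _ => by rw [integral_const_mul, orth' n m]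
    rw [Finset.sum_congr rfl hrw]
    refine Finset.sum_congr rfl fun n _ => ?_
    simp only [mul_ite, mul_one, mul_zero]
    rw [Finset.sum_ite_eq]
    by_cases hn : n ∈ t
    · simp [hn]
    · have : b n = 0 := by
        by_contra h; exact hn (hb.mem_toFinset.mpr h)
      simp [hn, this]
  have htsum_ab : (∑' n : ℤ, a n * b n) = ∑ n ∈ s, a n * b n := by
    refine tsum_eq_sum fun n hn => ?_
    have : a n = 0 := by
      by_contra h; exact hn (ha.mem_toFinset.mpr h)
    simp [this]
  constructor
  · simp only [hAts, hBts]
    rw [intervalIntegral.integral_of_le zero_le_one, ← hμ]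
    exact htsum_ab.trans part1.symm
  -- Part 2
  -- Parseval for B
  have eint2 : ∀ (m m' : ℤ), Integrable (fun x => e (-(m*x)) * e (m'*x)) μ := by
    intro m m'
    exact ((e_cont.comp (by fun_prop : Continuous fun x : ℝ => -((m:ℝ)*x))).mul
      (e_cont.comp (by fun_prop : Continuous fun x : ℝ => (m':ℝ)*x))).integrableOn_Ioc
  have orthB : ∀ m m' : ℤ, ∫ x, e (-(m*x)) * e (m'*x) ∂μ = if m' = m then 1 else 0 := by
    intro m m'
    rw [show (fun x : ℝ => e (-(m*x)) * e (m'*x)) = fun x : ℝ => e (m'*x) * e (-(m*x)) by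
      funext x; ring]
    exact orth' m' m
  have parseval : ∫ x, ‖B x‖^2 ∂μ = ∑ m ∈ t, ‖b m‖^2 := by
    have key : ∫ x, (B x * (starRingEnd ℂ) (B x)) ∂μ
        = ∑ m ∈ t, (b m * (starRingEnd ℂ) (b m)) := by
      have expand : ∀ x : ℝ, B x * (starRingEnd ℂ) (B x)
          = ∑ m ∈ t, ∑ m' ∈ t, (b m * (starRingEnd ℂ) (b m')) * (e (-(m*x)) * e (m'*x)) := by
        intro x
        rw [hB]
        rw [map_sum, Finset.sum_mul_sum]
        refine Finset.sum_congr rfl fun m _ => Finset.sum_congr rfl fun m' _ => ?_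
        rw [map_mul, conj_e]
        simp only [neg_neg]
        ring
      simp only [expand]
      rw [integral_finset_sum _ fun m _ => integrable_finset_sum _
        (fun m' _ => ((eint2 m m').const_mul _))]
      have hrw : ∀ m ∈ t, ∫ x, ∑ m' ∈ t, (b m * (starRingEnd ℂ) (b m')) * (e (-(m*x)) * e (m'*x)) ∂μ
          = ∑ m' ∈ t, (b m * (starRingEnd ℂ) (b m')) * (if m' = m then 1 else 0) := by
        intro m _
        rw [integral_finset_sum _ fun m' _ => (eint2 m m').const_mul _]
        exact Finset.sum_congr rfl fun m' _ => by rw [integral_const_mul, orthB m m']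
      rw [Finset.sum_congr rfl hrw]
      refine Finset.sum_congr rfl fun m hm => ?_
      simp only [mul_ite, mul_one, mul_zero]
      rw [Finset.sum_ite_eq']
      simp [hm]
    have h1 : ∀ z : ℂ, ((‖z‖^2 : ℝ) : ℂ) = z * (starRingEnd ℂ) z := by
      intro z
      rw [Complex.mul_conj]
      norm_cast
      rw [← Complex.sq_norm]
    have hc1 : ∫ x, ((‖B x‖^2 : ℝ) : ℂ) ∂μ = ((∑ m ∈ t, ‖b m‖^2 : ℝ) : ℂ) := by
      simp only [h1]
      rw [key, Complex.ofReal_sum]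
      exact Finset.sum_congr rfl fun m _ => (h1 (b m)).symm
    have hc2 : ∫ x, ((‖B x‖^2 : ℝ) : ℂ) ∂μ = ((∫ x, ‖B x‖^2 ∂μ : ℝ) : ℂ) :=
      integral_ofReal
    exact_mod_cast hc2.symm.trans hc1
  -- bounds
  obtain ⟨C, hC0, hCb⟩ := jutilaFin_bound 𝒬 δ
  set J : ℝ → ℝ := jutilaApprox 𝒬 δ with hJ
  have hJae : J =ᵐ[μ] jutilaFin 𝒬 δ := by
    rw [hμ]
    refine (ae_restrict_iff' measurableSet_Ioc).2 (Filter.Eventually.of_forall ?_)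
    intro x hx
    exact jutilaApprox_eq_fin 𝒬 h𝒬pos δ hδ hx
  have hJm : AEStronglyMeasurable J μ :=
    ((jutilaFin_measurable 𝒬 δ).aestronglyMeasurable).congr hJae.symm
  have hJbound : ∀ᵐ x ∂μ, |J x| ≤ C := by
    filter_upwards [hJae] with x hx
    rw [hx]; exact hCb x
  set Ca : ℝ := ∑ n ∈ s, ‖a n‖ with hCa'
  set Cb : ℝ := ∑ m ∈ t, ‖b m‖ with hCb'
  have hCa0 : 0 ≤ Ca := Finset.sum_nonneg fun _ _ => norm_nonneg _
  have hCb0 : 0 ≤ Cb := Finset.sum_nonneg fun _ _ => norm_nonneg _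
  have hAbd : ∀ x, ‖A x‖ ≤ Ca := by
    intro x
    refine (norm_sum_le _ _).trans ?_
    refine Finset.sum_le_sum fun n _ => ?_
    rw [norm_mul, e_norm, mul_one]
  have hBbd : ∀ x, ‖B x‖ ≤ Cb := by
    intro x
    refine (norm_sum_le _ _).trans ?_
    refine Finset.sum_le_sum fun m _ => ?_
    rw [norm_mul, e_norm, mul_one]
  -- integrability facts
  have hAB_int : Integrable (fun x => A x * B x) μ := (hAcont.mul hBcont).integrableOn_Ioc
  have hJAB_int : Integrable (fun x => (J x : ℂ) * (A x * B x)) μ := by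
    refine Integrable.mono' (integrable_const (C * (Ca * Cb)))
      ((Complex.continuous_ofReal.comp_aestronglyMeasurable hJm).mul
        ((hAcont.mul hBcont).aestronglyMeasurable)) ?_
    filter_upwards [hJbound] with x hx
    rw [norm_mul, norm_mul, Complex.norm_real, Real.norm_eq_abs]
    have h1 : ‖A x‖ * ‖B x‖ ≤ Ca * Cb :=
      mul_le_mul (hAbd x) (hBbd x) (norm_nonneg _) hCa0
    exact mul_le_mul hx h1 (by positivity) hC0
  have h1J : AEStronglyMeasurable (fun x => |1 - J x|) μ := by
    have hm : Measurable fun x => |1 - jutilaFin 𝒬 δ x| :=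
      (measurable_const.sub (jutilaFin_measurable 𝒬 δ)).abs
    refine hm.aestronglyMeasurable.congr ?_
    filter_upwards [hJae] with x hx
    rw [hx]
  have h1Jbd : ∀ᵐ x ∂μ, |1 - J x| ≤ 1 + C := by
    filter_upwards [hJbound] with x hx
    calc |1 - J x| ≤ |(1:ℝ)| + |J x| := abs_sub _ _
    _ ≤ 1 + C := by rw [abs_one]; linarith
  have hg_int : Integrable (fun x => |1 - J x| * ‖B x‖) μ := by
    refine Integrable.mono' (integrable_const ((1 + C) * Cb))
      (h1J.mul hBcont.norm.aestronglyMeasurable) ?_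
    filter_upwards [h1Jbd] with x hx
    rw [Real.norm_eq_abs, abs_mul, abs_abs, abs_norm]
    exact mul_le_mul hx (hBbd x) (norm_nonneg _) (by linarith)
  -- the key difference identity
  have key2 : (∑' n : ℤ, a n * b n) - ∫ x, (J x : ℂ) * (A x * B x) ∂μ
      = ∫ x, ((1 - J x : ℝ) : ℂ) * (A x * B x) ∂μ := by
    rw [htsum_ab, ← part1, ← integral_sub hAB_int hJAB_int]
    refine integral_congr_ae (Filter.Eventually.of_forall fun x => ?_)
    push_cast
    ring
  -- sup bound
  have hM := biSup_aux (fun x => ‖A x‖) Ca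
    (fun x => by rw [Real.norm_eq_abs, abs_of_nonneg (norm_nonneg _)]; exact hAbd x)
  have hM0 : 0 ≤ (⨆ y ∈ Set.Icc (0:ℝ) 1, ‖A y‖) :=
    le_trans (norm_nonneg _) (hM 0 ⟨le_refl 0, zero_le_one⟩)
  -- MemLp facts
  have hmem1 : MemLp (fun x => |1 - J x|) (ENNReal.ofReal 2) μ :=
    MemLp.of_bound h1J (1 + C) (by
      filter_upwards [h1Jbd] with x hx
      rwa [Real.norm_eq_abs, abs_abs])
  have hmem2 : MemLp (fun x => ‖B x‖) (ENNReal.ofReal 2) μ :=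
    MemLp.of_bound hBcont.norm.aestronglyMeasurable Cb (by
      refine Filter.Eventually.of_forall fun x => ?_
      rw [Real.norm_eq_abs, abs_norm]
      exact hBbd x)
  have hpq : Real.HolderConjugate 2 2 := Real.HolderConjugate.two_two
  -- main estimate
  simp only [hAts, hBts]
  rw [intervalIntegral.integral_of_le zero_le_one, intervalIntegral.integral_of_le zero_le_one,
    ← hμ]
  rw [key2]
  set M : ℝ := ⨆ y ∈ Set.Icc (0:ℝ) 1, ‖A y‖ with hMdef
  have htsumb : (∑' m : ℤ, ‖b m‖ ^ 2) = ∑ m ∈ t, ‖b m‖^2 := by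
    refine tsum_eq_sum fun m hm => ?_
    have : b m = 0 := by
      by_contra h; exact hm (hb.mem_toFinset.mpr h)
    simp [this]
  have hr2 : ∀ y : ℝ, y ^ (2:ℝ) = y ^ 2 := by
    intro y
    rw [show (2:ℝ) = ((2:ℕ):ℝ) by norm_num, Real.rpow_natCast]
  calc ‖∫ x, ((1 - J x : ℝ) : ℂ) * (A x * B x) ∂μ‖
      ≤ ∫ x, ‖((1 - J x : ℝ) : ℂ) * (A x * B x)‖ ∂μ := norm_integral_le_integral_norm _
  _ = ∫ x, |1 - J x| * (‖A x‖ * ‖B x‖) ∂μ := by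
      refine integral_congr_ae (Filter.Eventually.of_forall fun x => ?_)
      simp only [norm_mul, Complex.norm_real, Real.norm_eq_abs]
  _ ≤ ∫ x, (|1 - J x| * ‖B x‖) * M ∂μ := by
      refine integral_mono_of_nonneg (Filter.Eventually.of_forall fun x => by positivity)
        (hg_int.mul_const M) ?_
      rw [hμ]
      refine (ae_restrict_iff' measurableSet_Ioc).2 (Filter.Eventually.of_forall ?_)
      intro x hx
      have hAx : ‖A x‖ ≤ M := hM x (Set.Ioc_subset_Icc_self hx)
      calc |1 - J x| * (‖A x‖ * ‖B x‖) = (|1 - J x| * ‖B x‖) * ‖A x‖ := by ring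
      _ ≤ (|1 - J x| * ‖B x‖) * M := by
          refine mul_le_mul_of_nonneg_left hAx (by positivity)
  _ = (∫ x, |1 - J x| * ‖B x‖ ∂μ) * M := integral_mul_const _ _
  _ ≤ ((∫ x, |1 - J x| ^ (2:ℝ) ∂μ) ^ ((1:ℝ)/2) * (∫ x, ‖B x‖ ^ (2:ℝ) ∂μ) ^ ((1:ℝ)/2)) * M := by
      refine mul_le_mul_of_nonneg_right ?_ hM0
      exact integral_mul_le_Lp_mul_Lq_of_nonneg hpq
        (Filter.Eventually.of_forall fun x => abs_nonneg _)
        (Filter.Eventually.of_forall fun x => norm_nonneg _) hmem1 hmem2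
  _ = Real.sqrt (∫ x, |1 - J x| ^ 2 ∂μ) * M * Real.sqrt (∑' m : ℤ, ‖b m‖ ^ 2) := by
      simp only [hr2]
      rw [← Real.sqrt_eq_rpow, ← Real.sqrt_eq_rpow, parseval, htsumb]
      ring
end
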